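/- Let β ≥ 1 and θ be ordinals and let H : Ordinal → Ordinal → Prop (H η δ read as: stage η of the δ-th flow) satisfy: (a) for every δ and every η with 1 ≤ η ≤ β, (∀η' < η, H η' δ) implies H η δ; (b) for every δ, H β δ ↔ H 0 (δ+1); (c) for every limit ordinal δ, (∀δ' < δ, H 0 δ') implies H 0 δ. Define I : Ordinal → Prop by I τ = H (τ ∸ β·(τ/β)) (τ/β), where ∸ is left subtraction and / is left division of ordinals. Then I 0 ↔ H 0 0, I (β·(θ+1)) ↔ H 0 (θ+1), and for all τ with 1 ≤ τ ≤ β·(θ+1), (∀ζ < τ, I ζ) implies I τ; consequently H 0 0 implies H 0 (θ+1). -/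

import Mathlib

/-- Transfinite gluing of a family of flows: stage `τ` of the glued flow is stage
`τ - β·(τ/β)` of the `(τ/β)`-th flow (using left subtraction and left division of ordinals). -/
noncomputable def glueFamily (β : Ordinal) (H : Ordinal → Ordinal → Prop) : Ordinal → Prop :=
  fun τ => H (τ - β * (τ / β)) (τ / β)

/-- Transfinite gluing of `θ + 1` many flows of length `β` into one flow of length
`β·(θ + 1)`: if each flow is progressive on `[1, β]`, the end of each flow is the start of
the next, and the starts are continuous at limit stages, then the glued predicate `I` satisfies
`I 0 ↔ H 0 0`, `I (β·(θ+1)) ↔ H 0 (θ+1)`, and is progressive on `[1, β·(θ+1)]`; consequently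
`H 0 0` implies `H 0 (θ+1)`. -/
lemma glue_eq (β : Ordinal) (hβ0 : β ≠ 0) (H : Ordinal → Ordinal → Prop)
    (δ η : Ordinal) (hη : η < β) : glueFamily β H (β * δ + η) ↔ H η δ := by
  have hdiv : (β * δ + η) / β = δ := by
    rw [Ordinal.mul_add_div _ hβ0, Ordinal.div_eq_zero_of_lt hη, add_zero]
  unfold glueFamily
  rw [hdiv, Ordinal.add_sub_cancel]

theorem glue_family_flows (β θ : Ordinal) (hβ : 1 ≤ β)
    (H : Ordinal → Ordinal → Prop)
    (ha : ∀ δ η, 1 ≤ η → η ≤ β → (∀ η' < η, H η' δ) → H η δ)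
    (hb : ∀ δ, H β δ ↔ H 0 (δ + 1))
    (hc : ∀ δ : Ordinal, Order.IsSuccLimit δ → (∀ δ' < δ, H 0 δ') → H 0 δ) :
    (glueFamily β H 0 ↔ H 0 0) ∧
    (glueFamily β H (β * (θ + 1)) ↔ H 0 (θ + 1)) ∧
    (∀ τ, 1 ≤ τ → τ ≤ β * (θ + 1) → (∀ ζ < τ, glueFamily β H ζ) → glueFamily β H τ) ∧
    (H 0 0 → H 0 (θ + 1)) := by
  have hβ0 : β ≠ 0 := Ordinal.one_le_iff_ne_zero.mp hβ
  have hβpos : 0 < β := pos_iff_ne_zero.mpr hβ0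
  have part1 : glueFamily β H 0 ↔ H 0 0 := by
    simpa using glue_eq β hβ0 H 0 0 hβpos
  have part2 : glueFamily β H (β * (θ + 1)) ↔ H 0 (θ + 1) := by
    simpa using glue_eq β hβ0 H (θ + 1) 0 hβpos
  have key : ∀ τ, 1 ≤ τ → τ ≤ β * (θ + 1) → (∀ ζ < τ, glueFamily β H ζ) → glueFamily β H τ := by
    intro τ h1 _h2 ih
    have hmod : β * (τ / β) + τ % β = τ := Ordinal.div_add_mod τ β
    have hmodlt : τ % β < β := Ordinal.mod_lt τ hβ0
    rcases eq_or_ne (τ % β) 0 with hm | hm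
    · -- τ = β * (τ/β)
      have hτ : β * (τ / β) = τ := by rw [hm, add_zero] at hmod; exact hmod
      have hδ0 : τ / β ≠ 0 := by
        intro h
        rw [h, mul_zero] at hτ
        exact absurd (h1.trans_eq hτ.symm) (by simp)
      have hsub : ∀ δ' η', β * δ' + η' < τ → η' < β → H η' δ' := by
        intro δ' η' hlt hη'
        have := ih _ hlt
        rwa [glue_eq β hβ0 H _ _ hη'] at this
      rcases Ordinal.zero_or_succ_or_isSuccLimit (τ / β) with h0 | ⟨δ', hδ'⟩ | hlim
      · exact absurd h0 hδ0
      · -- successor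
        rw [← Ordinal.add_one_eq_succ, eq_comm] at hδ'
        have hgoal : H 0 (δ' + 1) := by
          rw [← hb]
          refine ha δ' β hβ le_rfl ?_
          intro η' hη'
          refine hsub δ' η' ?_ hη'
          calc β * δ' + η' < β * δ' + β := (add_lt_add_iff_left _).mpr hη'
            _ = β * (δ' + 1) := by rw [mul_add, mul_one]
            _ = τ := by rw [← hδ']; exact hτ
        have : glueFamily β H (β * (δ' + 1) + 0) := by
          rw [glue_eq β hβ0 H _ _ hβpos]; exact hgoal
        rwa [add_zero, ← hδ', hτ] at this
      · -- limit
        have hgoal : H 0 (τ / β) := by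
          refine hc _ hlim ?_
          intro δ' hδ'
          refine hsub δ' 0 ?_ hβpos
          rw [add_zero, ← hτ]
          exact mul_lt_mul_of_pos_left hδ' hβpos
        have : glueFamily β H (β * (τ / β) + 0) := by
          rw [glue_eq β hβ0 H _ _ hβpos]; exact hgoal
        rwa [add_zero, hτ] at this
    · -- remainder ≥ 1
      have hζlt : ∀ η' < τ % β, glueFamily β H (β * (τ / β) + η') := by
        intro η' hη'
        exact ih _ (by calc β * (τ / β) + η' < β * (τ / β) + τ % β := (add_lt_add_iff_left _).mpr hη'
                         _ = τ := hmod)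
      rw [← hmod]
      rw [glue_eq β hβ0 H _ _ hmodlt]
      refine ha _ _ (Ordinal.one_le_iff_ne_zero.mpr hm) hmodlt.le ?_
      intro η' hη'
      have := hζlt η' hη'
      rwa [glue_eq β hβ0 H _ _ (hη'.trans hmodlt)] at this
  refine ⟨part1, part2, key, ?_⟩
  intro h00
  have all : ∀ τ, τ ≤ β * (θ + 1) → glueFamily β H τ := by
    intro τ
    induction τ using Ordinal.induction with
    | h τ ihτ =>
      intro hle
      rcases eq_or_ne τ 0 with rfl | hτ
      · exact part1.mpr h00
      · exact key τ (Ordinal.one_le_iff_ne_zero.mpr hτ) hle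
          (fun ζ hζ => ihτ ζ hζ (hζ.le.trans hle))
  exact part2.mp (all _ le_rfl)
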